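/- Let P be a real symmetric positive definite n×n matrix and let L be a real lower-triangular n×n matrix. If P·L + Lᵀ·P = 0, then L = 0. -/

import Mathlib

open Matrix

/-- If `P` is symmetric positive definite, `L` is lower triangular and `P L + Lᵀ P = 0`,
then `L = 0`. -/
theorem posdef_lowerTriangular_skew_zero {n : ℕ} (P L : Matrix (Fin n) (Fin n) ℝ)
    (hP : P.PosDef) (hL : ∀ i j : Fin n, i < j → L i j = 0)
    (h : P * L + Lᵀ * P = 0) :
    L = 0 := by
  have hsym : ∀ i j, P i j = P j i := by
    intro i j
    have := congrFun (congrFun hP.1 i) j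
    simpa [Matrix.conjTranspose_apply] using this.symm
  -- skewness of P * L
  have hskew : ∀ i j, (P * L) i j = -((P * L) j i) := by
    intro i j
    have h0 := congrFun (congrFun h i) j
    simp only [Matrix.add_apply, Matrix.zero_apply, Matrix.mul_apply,
      Matrix.transpose_apply] at h0
    have : (P * L) j i = ∑ k, Lᵀ i k * P k j := by
      simp [Matrix.mul_apply, Matrix.transpose_apply, mul_comm]
      exact Finset.sum_congr rfl fun k _ => by rw [hsym j k, mul_comm]
    rw [this]
    simp only [Matrix.mul_apply, Matrix.transpose_apply]
    linarith [h0]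
  have key : ∀ j : Fin n, ∀ k : Fin n, L k j = 0 := by
    have wf : WellFounded ((· > ·) : Fin n → Fin n → Prop) :=
      (Finite.to_wellFoundedGT).wf
    intro j
    induction j using wf.induction with
    | _ j ih =>
      intro k
      set v : Fin n → ℝ := fun k => L k j with hv
      -- (P *ᵥ v) i = (P * L) i j
      have hmv : ∀ i, (P *ᵥ v) i = (P * L) i j := by
        intro i; simp [Matrix.mulVec, Matrix.mul_apply, dotProduct, hv]
      have hcol : ∀ i : Fin n, j ≤ i → (P * L) i j = 0 := by
        intro i hij
        rcases eq_or_lt_of_le hij with rfl | hlt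
        · have := hskew j j; linarith
        · have hji : (P * L) j i = 0 := by
            simp only [Matrix.mul_apply]
            apply Finset.sum_eq_zero
            intro x _
            rw [ih i hlt x, mul_zero]
          rw [hskew i j, hji, neg_zero]
      have hdot : v ⬝ᵥ (P *ᵥ v) = 0 := by
        apply Finset.sum_eq_zero
        intro i _
        rcases lt_or_ge i j with hlt | hle
        · simp [hv, hL i j hlt]
        · rw [hmv i, hcol i hle, mul_zero]
      have hv0 : v = 0 := by
        by_contra hne
        have := hP.dotProduct_mulVec_pos hne
        simp only [star_trivial] at this
        rw [hdot] at this
        exact lt_irrefl 0 this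
      exact congrFun hv0 k
  ext i j
  exact key j i
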